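/- The module E = coker(φ_u) satisfies condition G_{d−1}: ht I_j(φ_u) ≥ n−u−j+1 for every integer j with n−u−d+2 ≤ j ≤ n−u−1. -/
import Mathlib


open MvPolynomial Matrix

/-- The ideal generated by all `j × j` minors of a matrix. -/
noncomputable def minorsIdeal {A : Type*} [CommRing A] {p q : ℕ}
    (M : Matrix (Fin p) (Fin q) A) (j : ℕ) : Ideal A :=
  Ideal.span { x | ∃ (r : Fin j → Fin p) (c : Fin j → Fin q),
    Function.Injective r ∧ Function.Injective c ∧ x = (M.submatrix r c).det }

/-- The height of an ideal: the infimum of the heights of the primes containing it. -/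
noncomputable def idealHeight {A : Type*} [CommRing A] (I : Ideal A) : ℕ∞ :=
  ⨅ (P : PrimeSpectrum A) (_ : I ≤ P.asIdeal), Order.height P

lemma idealHeight_mono {A : Type*} [CommRing A] {I J : Ideal A} (h : I ≤ J) :
    idealHeight I ≤ idealHeight J := by
  refine le_iInf₂ fun P hP => ?_
  exact iInf₂_le P (h.trans hP)

lemma minorsIdeal_step {A : Type*} [CommRing A] {p q : ℕ}
    (ψ : Matrix (Fin p) (Fin q) A) (t : ℕ) :
    minorsIdeal ψ (t + 1) ≤ minorsIdeal ψ t := by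
  rw [minorsIdeal, Ideal.span_le]
  rintro x ⟨r, c, hr, hc, rfl⟩
  rw [Matrix.det_succ_column_zero]
  refine Ideal.sum_mem _ fun i _ => ?_
  rw [Matrix.submatrix_submatrix]
  refine Ideal.mul_mem_left _ _ (Ideal.subset_span ?_)
  exact ⟨r ∘ i.succAbove, c ∘ Fin.succ,
    hr.comp Fin.succAbove_right_injective,
    hc.comp (Fin.succ_injective _), rfl⟩

lemma minorsIdeal_anti {A : Type*} [CommRing A] {p q : ℕ}
    (ψ : Matrix (Fin p) (Fin q) A) {j t : ℕ} (h : j ≤ t) :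
    minorsIdeal ψ t ≤ minorsIdeal ψ j := by
  induction t with
  | zero => simp_all
  | succ t ih =>
    rcases Nat.eq_or_lt_of_le h with rfl | h'
    · exact le_rfl
    · exact (minorsIdeal_step ψ t).trans (ih (by omega))

section Main

variable {k : Type*} [Field k] {d m u : ℕ}
variable (φ : Matrix (Fin (m + 1)) (Fin m) (MvPolynomial (Fin d) k))
variable (φu : Matrix (Fin (m + 1)) (Fin (m - u)) (MvPolynomial (Fin d) k))

lemma good_case (hφu : ∀ (i : Fin (m + 1)) (j : Fin (m - u)),
      φu i j = φ i ⟨u + (j : ℕ), by omega⟩)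
    (t : ℕ) (r : Fin t → Fin (m + 1)) (c : Fin t → Fin m)
    (hr : Function.Injective r) (hc : Function.Injective c)
    (hgood : ∀ i, u ≤ (c i : ℕ)) (jj : ℕ) (hjj : jj ≤ t) :
    (φ.submatrix r c).det ∈ minorsIdeal φu jj := by
  refine minorsIdeal_anti φu hjj ?_
  set c' : Fin t → Fin (m - u) := fun x =>
    ⟨(c x : ℕ) - u, by have := hgood x; have := (c x).isLt; omega⟩ with hc'
  have hc'inj : Function.Injective c' := by
    intro a b hab
    apply hc
    have h1 := congrArg Fin.val hab
    simp only [hc'] at h1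
    have := hgood a; have := hgood b
    exact Fin.ext (by omega)
  have heq : φ.submatrix r c = φu.submatrix r c' := by
    refine Matrix.ext fun i x => ?_
    rw [Matrix.submatrix_apply, Matrix.submatrix_apply, hφu]
    refine congrArg (φ (r i)) (Fin.ext ?_)
    have := hgood x
    simp only [hc']
    omega
  exact Ideal.subset_span ⟨r, c', hr, hc'inj, by rw [heq]⟩

lemma lemB (hφu : ∀ (i : Fin (m + 1)) (j : Fin (m - u)),
      φu i j = φ i ⟨u + (j : ℕ), by omega⟩) :
    ∀ (t : ℕ) (r : Fin t → Fin (m + 1)) (c : Fin t → Fin m),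
      Function.Injective r → Function.Injective c → ∀ jj : ℕ,
      jj + (Finset.univ.filter (fun i => (c i : ℕ) < u)).card ≤ t →
      (φ.submatrix r c).det ∈ minorsIdeal φu jj := by
  intro t
  induction t with
  | zero =>
    intro r c hr hc jj hjj
    refine good_case φ φu hφu 0 r c hr hc (fun i => i.elim0) jj ?_
    omega
  | succ t ih =>
    intro r c hr hc jj hjj
    by_cases hbad : ∃ i0, (c i0 : ℕ) < u
    · obtain ⟨i0, hi0⟩ := hbad
      rw [Matrix.det_succ_column _ i0]
      refine Ideal.sum_mem _ fun i _ => ?_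
      rw [Matrix.submatrix_submatrix]
      refine Ideal.mul_mem_left _ _ ?_
      refine ih (r ∘ i.succAbove) (c ∘ i0.succAbove)
        (hr.comp Fin.succAbove_right_injective)
        (hc.comp Fin.succAbove_right_injective) jj ?_
      set bad := Finset.univ.filter (fun i => (c i : ℕ) < u) with hbadset
      have hi0mem : i0 ∈ bad := Finset.mem_filter.2 ⟨Finset.mem_univ _, hi0⟩
      have hle : (Finset.univ.filter
          (fun x : Fin t => ((c ∘ i0.succAbove) x : ℕ) < u)).card ≤ (bad.erase i0).card := by
        refine Finset.card_le_card_of_injOn i0.succAbove (fun x hx => ?_)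
          (Fin.succAbove_right_injective.injOn)
        refine Finset.mem_erase.2 ⟨Fin.succAbove_ne i0 x, ?_⟩
        exact Finset.mem_filter.2 ⟨Finset.mem_univ _, (Finset.mem_filter.1 hx).2⟩
      rw [Finset.card_erase_of_mem hi0mem] at hle
      have hcard1 : 1 ≤ bad.card := Finset.card_pos.2 ⟨i0, hi0mem⟩
      omega
    · push_neg at hbad
      exact good_case φ φu hφu (t + 1) r c hr hc (fun i => hbad i) jj (by omega)

lemma lemC (hφu : ∀ (i : Fin (m + 1)) (j : Fin (m - u)),
      φu i j = φ i ⟨u + (j : ℕ), by omega⟩) (jj : ℕ) :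
    minorsIdeal φ (jj + u) ≤ minorsIdeal φu jj := by
  rw [minorsIdeal, Ideal.span_le]
  rintro x ⟨r, c, hr, hc, rfl⟩
  refine lemB φ φu hφu (jj + u) r c hr hc jj ?_
  have : (Finset.univ.filter (fun i => (c i : ℕ) < u)).card ≤ (Finset.range u).card := by
    refine Finset.card_le_card_of_injOn (fun i => (c i : ℕ)) (fun x hx => ?_) ?_
    · exact Finset.mem_range.2 (Finset.mem_filter.1 hx).2
    · exact (Fin.val_injective.comp hc).injOn
  rw [Finset.card_range] at this
  omega

end Main

theorem stmt_14
    (k : Type*) [Field k] [IsAlgClosed k] (d m : ℕ)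
    (hd : 3 ≤ d) (hn : d + 1 ≤ m + 1)
    (φ : Matrix (Fin (m + 1)) (Fin m) (MvPolynomial (Fin d) k))
    (hφlin : ∀ i j, (φ i j).IsHomogeneous 1)
    (g : Fin (m + 1) → MvPolynomial (Fin d) k)
    (hg : ∀ i, g i = (-1) ^ (i : ℕ) * (φ.submatrix i.succAbove id).det)
    (hhtI : idealHeight (Ideal.span (Set.range g)) = 2)
    (hI1 : minorsIdeal φ 1 = Ideal.span (Set.range MvPolynomial.X))
    (hG : ∀ j : ℕ, m + 1 - d + 2 ≤ j → j ≤ m →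
      ((m + 1 - j + 1 : ℕ) : ℕ∞) ≤ idealHeight (minorsIdeal φ j))
    (hnG : idealHeight (minorsIdeal φ (m + 1 - d + 1)) ≤ ((d - 1 : ℕ) : ℕ∞))
    (u : ℕ) (hu1 : 1 ≤ u) (hu2 : u ≤ m + 1 - d)
    (hu : idealHeight (minorsIdeal φ (u + 1)) = ((d - 1 : ℕ) : ℕ∞))
    (huleast : ∀ v : ℕ, 1 ≤ v →
      idealHeight (minorsIdeal φ (v + 1)) = ((d - 1 : ℕ) : ℕ∞) → u ≤ v)
    (M : Fin d → Matrix (Fin (m + 1)) (Fin m) k)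
    (hM0 : ∀ i j, M ⟨0, by omega⟩ i j = if (i : ℕ) = (j : ℕ) ∧ (i : ℕ) < u then 1 else 0)
    (hφcanon : ∀ i j, φ i j = ∑ a : Fin d, MvPolynomial.C (M a i j) * MvPolynomial.X a)
    (φu : Matrix (Fin (m + 1)) (Fin (m - u)) (MvPolynomial (Fin d) k))
    (hφu : ∀ (i : Fin (m + 1)) (j : Fin (m - u)), φu i j = φ i ⟨u + (j : ℕ), by omega⟩)
    :
    ∀ j : ℕ, m + 1 - u - d + 2 ≤ j → j ≤ m - u →
      ((m + 1 - u - j + 1 : ℕ) : ℕ∞) ≤ idealHeight (minorsIdeal φu j) := by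
  intro j hj1 hj2
  have h1 : m + 1 - d + 2 ≤ j + u := by omega
  have h2 : j + u ≤ m := by omega
  have hGbound := hG (j + u) h1 h2
  have heq : m + 1 - (j + u) + 1 = m + 1 - u - j + 1 := by omega
  rw [heq] at hGbound
  exact hGbound.trans (idealHeight_mono (lemC φ φu hφu j))
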